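/- Let n > k be positive integers, let v^n be the Galerkin approximation of order n, and define φ(t) = Σ_{i=1}^k λ_i² v^n_i(t)², ρ(t) = Σ_{i=k+1}^n λ_i² v^n_i(t)², and F(t) = Σ_{i=k+1}^n (v^n_i)'(t)² + M(φ(t) + ρ(t)) − M(φ(t)). Then F(t) ≤ F(0)·exp(L H₀ λ_k t / ν₁²) for every t ≥ 0, where H₀ = Σ_i b_i² + M(Σ_i λ_i² a_i²). -/

import Mathlib

open Filter Set

/-- Derivative from within the half line `[0, ∞)`. -/
noncomputable def derIci (f : ℝ → ℝ) : ℝ → ℝ := derivWithin f (Set.Ici (0 : ℝ))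

/-- The pair `(a, b)` belongs to the energy space `D(A^{1/2}) × H`. -/
def InEnergy (lam a b : ℕ → ℝ) : Prop :=
  Summable fun i => (b i) ^ 2 + (lam i) ^ 2 * (a i) ^ 2

/-- `R_k(a,b) = Σ_{i>k} (b_i² + λ_i² a_i²)`. -/
noncomputable def Rk (lam a b : ℕ → ℝ) (k : ℕ) : ℝ :=
  ∑' i : ℕ, if k < i then (b i) ^ 2 + (lam i) ^ 2 * (a i) ^ 2 else 0

/-- Lacunary (spectral gap) data: `R_k(a,b)·k²·exp(k λ_k) ≤ 1` for infinitely many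
positive integers `k`. -/
def Lacunary (lam a b : ℕ → ℝ) : Prop :=
  InEnergy lam a b ∧
    {k : ℕ | 0 < k ∧
      Rk lam a b k * (k : ℝ) ^ 2 * Real.exp ((k : ℝ) * lam k) ≤ 1}.Infinite

/-- `M(σ) = ∫₀^σ m(s) ds`. -/
noncomputable def Mfun (m : ℝ → ℝ) (σ : ℝ) : ℝ := ∫ s in (0:ℝ)..σ, m s

/-- The conserved quantity `H₀ = Σ_i b_i² + M(Σ_i λ_i² a_i²)`. -/
noncomputable def H0 (lam : ℕ → ℝ) (m : ℝ → ℝ) (a b : ℕ → ℝ) : ℝ :=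
  (∑' i, (b i) ^ 2) + Mfun m (∑' i, (lam i) ^ 2 * (a i) ^ 2)

/-- Galerkin approximation of order `n` (components of index `> n` extended by zero):
the solution of `v_i'' + m(Σ_{j≤n} λ_j² v_j²) λ_i² v_i = 0` for `i ≤ n`, with
`v_i(0) = a_i`, `v_i'(0) = b_i`. -/
def GalerkinSol (lam : ℕ → ℝ) (m : ℝ → ℝ) (a b : ℕ → ℝ) (n : ℕ)
    (v : ℕ → ℝ → ℝ) : Prop :=
  (∀ i, ContDiffOn ℝ 2 (v i) (Set.Ici 0)) ∧
  (∀ i ≤ n, v i 0 = a i) ∧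
  (∀ i ≤ n, derIci (v i) 0 = b i) ∧
  (∀ i, n < i → ∀ t, v i t = 0) ∧
  (∀ i ≤ n, ∀ t, 0 ≤ t →
    derIci (derIci (v i)) t
      + m (∑ j ∈ Finset.range (n + 1), (lam j) ^ 2 * (v j t) ^ 2)
        * (lam i) ^ 2 * v i t = 0)

/-- Global weak solution with initial data `(a,b)`: a family `v_i ∈ C²([0,∞))` with
`v_i(0) = a_i`, `v_i'(0) = b_i`, such that `Σ v_i'(t)²` and `Σ λ_i² v_i(t)²` converge,
the maps `t ↦ (v_i'(t))_i` and `t ↦ (λ_i v_i(t))_i` are continuous from `[0,∞)` into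
`ℓ²`, and `v_i'' + m(Σ_j λ_j² v_j²) λ_i² v_i = 0` for every `i` and every `t ≥ 0`. -/
def WeakSol (lam : ℕ → ℝ) (m : ℝ → ℝ) (a b : ℕ → ℝ) (v : ℕ → ℝ → ℝ) : Prop :=
  (∀ i, ContDiffOn ℝ 2 (v i) (Set.Ici 0)) ∧
  (∀ i, v i 0 = a i) ∧
  (∀ i, derIci (v i) 0 = b i) ∧
  (∀ t, 0 ≤ t → Summable fun i => (derIci (v i) t) ^ 2) ∧
  (∀ t, 0 ≤ t → Summable fun i => (lam i) ^ 2 * (v i t) ^ 2) ∧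
  (∀ t₀, 0 ≤ t₀ → Tendsto (fun t => ∑' i, (derIci (v i) t - derIci (v i) t₀) ^ 2)
      (nhdsWithin t₀ (Set.Ici 0)) (nhds 0)) ∧
  (∀ t₀, 0 ≤ t₀ → Tendsto (fun t => ∑' i, (lam i) ^ 2 * (v i t - v i t₀) ^ 2)
      (nhdsWithin t₀ (Set.Ici 0)) (nhds 0)) ∧
  (∀ i, ∀ t, 0 ≤ t →
    derIci (derIci (v i)) t
      + m (∑' j, (lam j) ^ 2 * (v j t) ^ 2) * (lam i) ^ 2 * v i t = 0)

open MeasureTheory intervalIntegral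

lemma Mfun_intInt {m : ℝ → ℝ} (hm : ContinuousOn m (Ici 0)) {x y : ℝ}
    (hx : 0 ≤ x) (hy : 0 ≤ y) : IntervalIntegrable m volume x y :=
  (hm.mono fun _ hz => le_trans (le_min hx hy) hz.1).intervalIntegrable

lemma Mfun_hasDerivWithinAt {m : ℝ → ℝ} (hm : ContinuousOn m (Ici 0)) {σ : ℝ} (hσ : 0 ≤ σ) :
    HasDerivWithinAt (Mfun m) (m σ) (Ici 0) σ := by
  have hint : IntervalIntegrable m volume 0 σ := Mfun_intInt hm le_rfl hσ
  have hAE : AEStronglyMeasurable m (volume.restrict (Ici (0:ℝ))) :=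
    hm.aestronglyMeasurable measurableSet_Ici
  rcases eq_or_lt_of_le hσ with h | h
  · subst h
    exact integral_hasDerivWithinAt_right (t := Ioi 0) hint
      (AEStronglyMeasurable.stronglyMeasurableAtFilter_of_mem hAE
        (Filter.mem_of_superset self_mem_nhdsWithin Ioi_subset_Ici_self))
      ((hm.continuousWithinAt (Set.mem_Ici.mpr le_rfl)).mono Ioi_subset_Ici_self)
  · have hca : ContinuousAt m σ := hm.continuousAt (Ici_mem_nhds h)
    exact (integral_hasDerivAt_right hint
      (AEStronglyMeasurable.stronglyMeasurableAtFilter_of_mem hAE (Ici_mem_nhds h))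
      hca).hasDerivWithinAt

lemma Mfun_lb {m : ℝ → ℝ} (hm : ContinuousOn m (Ici 0)) {c σ₁ σ₂ : ℝ}
    (hc : ∀ s, 0 ≤ s → c ≤ m s) (h1 : 0 ≤ σ₁) (h12 : σ₁ ≤ σ₂) :
    c * (σ₂ - σ₁) ≤ Mfun m σ₂ - Mfun m σ₁ := by
  have h2 : (0:ℝ) ≤ σ₂ := le_trans h1 h12
  have hd : Mfun m σ₂ - Mfun m σ₁ = ∫ s in σ₁..σ₂, m s :=
    integral_interval_sub_left (Mfun_intInt hm le_rfl h2) (Mfun_intInt hm le_rfl h1)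
  have hmono : (∫ s in σ₁..σ₂, (fun _ => c) s) ≤ ∫ s in σ₁..σ₂, m s :=
    integral_mono_on h12 intervalIntegrable_const (Mfun_intInt hm h1 h2)
      (fun x hx => hc x (le_trans h1 hx.1))
  rw [hd]
  calc c * (σ₂ - σ₁) = ∫ _ in σ₁..σ₂, c := by
        rw [intervalIntegral.integral_const]; simp [smul_eq_mul]; ring
    _ ≤ _ := hmono

lemma Mfun_zero (m : ℝ → ℝ) : Mfun m 0 = 0 := integral_same

set_option maxHeartbeats 1000000 in
/-- exponential growth estimate for the modified high-frequency energy F. -/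
theorem stmt9 (lam : ℕ → ℝ) (hpos : ∀ i, 0 < lam i) (hmono : Monotone lam)
    (htop : Tendsto lam atTop atTop)
    (μ₁ μ₂ L : ℝ) (hμ₁ : 0 < μ₁) (hL : 0 < L) (m : ℝ → ℝ)
    (hm_reg : ContDiffOn ℝ 1 m (Set.Ici 0))
    (hm_lb : ∀ σ, 0 ≤ σ → μ₁ ≤ m σ) (hm_ub : ∀ σ, 0 ≤ σ → m σ ≤ μ₂)
    (hm_lip : ∀ σ₁ σ₂, 0 ≤ σ₁ → 0 ≤ σ₂ → |m σ₂ - m σ₁| ≤ L * |σ₂ - σ₁|)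
    (a b : ℕ → ℝ) (hab : InEnergy lam a b)
    (k n : ℕ) (hk : 0 < k) (hkn : k < n)
    (v : ℕ → ℝ → ℝ) (hv : GalerkinSol lam m a b n v)
    (φ ρ F : ℝ → ℝ)
    (hφ : ∀ t, φ t = ∑ i ∈ Finset.range (k + 1), (lam i) ^ 2 * (v i t) ^ 2)
    (hρ : ∀ t, ρ t = ∑ i ∈ Finset.Icc (k + 1) n, (lam i) ^ 2 * (v i t) ^ 2)
    (hF : ∀ t, F t = (∑ i ∈ Finset.Icc (k + 1) n, (derIci (v i) t) ^ 2)
      + Mfun m (φ t + ρ t) - Mfun m (φ t)) :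
    ∀ t, 0 ≤ t →
      F t ≤ F 0 * Real.exp (L * H0 lam m a b * lam k * t / (min 1 μ₁) ^ 2) := by
  intro T hT
  obtain ⟨hreg, hva, hvb, -, hode⟩ := hv
  set ν := min 1 μ₁ with hνdef
  have hν0 : 0 < ν := lt_min one_pos hμ₁
  have hν1 : ν ≤ 1 := min_le_left _ _
  have hνμ : ν ≤ μ₁ := min_le_right _ _
  have hmc : ContinuousOn m (Ici 0) := hm_reg.continuousOn
  have hUD : UniqueDiffOn ℝ (Ici (0:ℝ)) := uniqueDiffOn_Ici 0
  have hMc : ContinuousOn (Mfun m) (Ici 0) :=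
    fun σ hσ => (Mfun_hasDerivWithinAt hmc hσ).continuousWithinAt
  -- first derivatives
  have hvd : ∀ i, ∀ s ∈ Ici (0:ℝ), HasDerivWithinAt (v i) (derIci (v i) s) (Ici 0) s :=
    fun i s hs => (((hreg i).differentiableOn (by norm_num)) s hs).hasDerivWithinAt
  have hwreg : ∀ i, ContDiffOn ℝ 1 (derIci (v i)) (Ici 0) :=
    fun i => (hreg i).derivWithin hUD (by norm_num)
  have hwd : ∀ i, ∀ s ∈ Ici (0:ℝ),
      HasDerivWithinAt (derIci (v i)) (derIci (derIci (v i)) s) (Ici 0) s :=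
    fun i s hs => (((hwreg i).differentiableOn one_ne_zero) s hs).hasDerivWithinAt
  have hvcont : ∀ i, ContinuousOn (v i) (Ici (0:ℝ)) := fun i => (hreg i).continuousOn
  have hwcont : ∀ i, ContinuousOn (derIci (v i)) (Ici (0:ℝ)) := fun i => (hwreg i).continuousOn
  -- splitting of sums
  have hsplitSum : ∀ f : ℕ → ℝ, ∑ i ∈ Finset.range (n+1), f i
      = (∑ i ∈ Finset.range (k+1), f i) + ∑ i ∈ Finset.Icc (k+1) n, f i := by
    intro f
    rw [Finset.range_eq_Ico, Finset.range_eq_Ico, ← Finset.Ico_add_one_right_eq_Icc]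
    exact (Finset.sum_Ico_consecutive _ (by omega) (by omega)).symm
  have hφ0 : ∀ s, 0 ≤ φ s := by
    intro s; rw [hφ]; exact Finset.sum_nonneg fun i _ => by positivity
  have hρ0 : ∀ s, 0 ≤ ρ s := by
    intro s; rw [hρ]; exact Finset.sum_nonneg fun i _ => by positivity
  -- ODE in convenient form
  have hodeS : ∀ i, i ≤ n → ∀ s, 0 ≤ s →
      derIci (derIci (v i)) s = -(m (φ s + ρ s) * (lam i)^2 * v i s) := by
    intro i hi s hs
    have h := hode i hi s hs
    have e : (∑ j ∈ Finset.range (n+1), (lam j)^2 * (v j s)^2) = φ s + ρ s := by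
      rw [hφ, hρ]; exact hsplitSum _
    rw [e] at h
    linarith
  -- derivatives of square terms
  have hterm : ∀ i, ∀ s ∈ Ici (0:ℝ), HasDerivWithinAt (fun u => (lam i)^2 * (v i u)^2)
      (2 * (lam i)^2 * (v i s * derIci (v i) s)) (Ici 0) s := by
    intro i s hs
    have h2 : HasDerivWithinAt (fun u => (lam i)^2 * (v i u * v i u))
        ((lam i)^2 * (derIci (v i) s * v i s + v i s * derIci (v i) s)) (Ici 0) s :=
      ((hvd i s hs).mul (hvd i s hs)).const_mul _
    have h3 : (fun u => (lam i)^2 * (v i u)^2) = fun u => (lam i)^2 * (v i u * v i u) := by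
      funext u; ring
    rw [h3]; convert h2 using 1; ring
  have hwterm : ∀ i, ∀ s ∈ Ici (0:ℝ), HasDerivWithinAt (fun u => (derIci (v i) u)^2)
      (2 * (derIci (v i) s * derIci (derIci (v i)) s)) (Ici 0) s := by
    intro i s hs
    have h2 : HasDerivWithinAt (fun u => derIci (v i) u * derIci (v i) u)
        (derIci (derIci (v i)) s * derIci (v i) s + derIci (v i) s * derIci (derIci (v i)) s)
        (Ici 0) s := (hwd i s hs).mul (hwd i s hs)
    have h3 : (fun u => (derIci (v i) u)^2) = fun u => derIci (v i) u * derIci (v i) u := by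
      funext u; ring
    rw [h3]; convert h2 using 1; ring
  have hφeq : φ = fun s => ∑ i ∈ Finset.range (k+1), (lam i)^2 * (v i s)^2 := funext hφ
  have hρeq : ρ = fun s => ∑ i ∈ Finset.Icc (k+1) n, (lam i)^2 * (v i s)^2 := funext hρ
  have hφd : ∀ s ∈ Ici (0:ℝ), HasDerivWithinAt φ
      (∑ i ∈ Finset.range (k+1), 2 * (lam i)^2 * (v i s * derIci (v i) s)) (Ici 0) s := by
    intro s hs; rw [hφeq]
    exact HasDerivWithinAt.fun_sum fun i _ => hterm i s hs
  have hρd : ∀ s ∈ Ici (0:ℝ), HasDerivWithinAt ρ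
      (∑ i ∈ Finset.Icc (k+1) n, 2 * (lam i)^2 * (v i s * derIci (v i) s)) (Ici 0) s := by
    intro s hs; rw [hρeq]
    exact HasDerivWithinAt.fun_sum fun i _ => hterm i s hs
  have hSnn : ∀ s, 0 ≤ φ s + ρ s := fun s => add_nonneg (hφ0 s) (hρ0 s)
  have hMB : ∀ s ∈ Ici (0:ℝ), HasDerivWithinAt (fun u => Mfun m (φ u + ρ u))
      (m (φ s + ρ s) * ((∑ i ∈ Finset.range (k+1), 2 * (lam i)^2 * (v i s * derIci (v i) s))
        + ∑ i ∈ Finset.Icc (k+1) n, 2 * (lam i)^2 * (v i s * derIci (v i) s))) (Ici 0) s := by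
    intro s hs
    exact (Mfun_hasDerivWithinAt hmc (hSnn s)).comp s ((hφd s hs).add (hρd s hs))
      (fun u _ => hSnn u)
  have hMC : ∀ s ∈ Ici (0:ℝ), HasDerivWithinAt (fun u => Mfun m (φ u))
      (m (φ s) * ∑ i ∈ Finset.range (k+1), 2 * (lam i)^2 * (v i s * derIci (v i) s))
      (Ici 0) s := by
    intro s hs
    exact (Mfun_hasDerivWithinAt hmc (hφ0 s)).comp s (hφd s hs) (fun u _ => hφ0 u)
  -- energy conservation
  have hEd : ∀ s ∈ Ici (0:ℝ), HasDerivWithinAt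
      (fun u => (∑ i ∈ Finset.range (n+1), (derIci (v i) u)^2) + Mfun m (φ u + ρ u)) 0
      (Ici 0) s := by
    intro s hs
    have hA : HasDerivWithinAt (fun u => ∑ i ∈ Finset.range (n+1), (derIci (v i) u)^2)
        (∑ i ∈ Finset.range (n+1), 2 * (derIci (v i) s * derIci (derIci (v i)) s))
        (Ici 0) s := HasDerivWithinAt.fun_sum fun i _ => hwterm i s hs
    have h := hA.add (hMB s hs)
    have hzero : (∑ i ∈ Finset.range (n+1), 2 * (derIci (v i) s * derIci (derIci (v i)) s))
        + m (φ s + ρ s) * ((∑ i ∈ Finset.range (k+1), 2 * (lam i)^2 * (v i s * derIci (v i) s))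
          + ∑ i ∈ Finset.Icc (k+1) n, 2 * (lam i)^2 * (v i s * derIci (v i) s)) = 0 := by
      have e1 : (∑ i ∈ Finset.range (k+1), 2 * (lam i)^2 * (v i s * derIci (v i) s))
          + ∑ i ∈ Finset.Icc (k+1) n, 2 * (lam i)^2 * (v i s * derIci (v i) s)
          = ∑ i ∈ Finset.range (n+1), 2 * (lam i)^2 * (v i s * derIci (v i) s) :=
        (hsplitSum _).symm
      rw [e1, Finset.mul_sum, ← Finset.sum_add_distrib]
      apply Finset.sum_eq_zero
      intro i hi
      rw [hodeS i (Finset.mem_range_succ_iff.mp hi) s hs]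
      ring
    rw [hzero] at h
    exact h
  have hEcont : ContinuousOn
      (fun u => (∑ i ∈ Finset.range (n+1), (derIci (v i) u)^2) + Mfun m (φ u + ρ u))
      (Ici 0) := by
    have hφc : ContinuousOn φ (Ici (0:ℝ)) := by
      rw [hφeq]
      exact continuousOn_finset_sum _ fun i _ => continuousOn_const.mul ((hvcont i).pow 2)
    have hρc : ContinuousOn ρ (Ici (0:ℝ)) := by
      rw [hρeq]
      exact continuousOn_finset_sum _ fun i _ => continuousOn_const.mul ((hvcont i).pow 2)
    exact (continuousOn_finset_sum _ fun i _ => (hwcont i).pow 2).add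
      (hMc.comp (hφc.add hρc) fun u _ => hSnn u)
  have hEconst : ∀ s, 0 ≤ s →
      (∑ i ∈ Finset.range (n+1), (derIci (v i) s)^2) + Mfun m (φ s + ρ s)
      = (∑ i ∈ Finset.range (n+1), (derIci (v i) 0)^2) + Mfun m (φ 0 + ρ 0) := by
    intro s hs
    exact constant_of_has_deriv_right_zero (hEcont.mono Set.Icc_subset_Ici_self)
      (fun x hx => (hEd x hx.1).mono (Ici_subset_Ici.mpr hx.1)) s (right_mem_Icc.mpr hs)
  -- E 0 ≤ H0
  have hsumb : Summable (fun i => (b i)^2) :=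
    hab.of_nonneg_of_le (fun i => sq_nonneg _) (fun i => le_add_of_nonneg_right (by positivity))
  have hsuma : Summable (fun i => (lam i)^2 * (a i)^2) :=
    hab.of_nonneg_of_le (fun i => by positivity) (fun i => le_add_of_nonneg_left (sq_nonneg _))
  have hE0le : (∑ i ∈ Finset.range (n+1), (derIci (v i) 0)^2) + Mfun m (φ 0 + ρ 0)
      ≤ H0 lam m a b := by
    have h1 : (∑ i ∈ Finset.range (n+1), (derIci (v i) 0)^2) ≤ ∑' i, (b i)^2 := by
      rw [Finset.sum_congr rfl
        (fun i hi => by rw [hvb i (Finset.mem_range_succ_iff.mp hi)])]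
      exact hsumb.sum_le_tsum _ (fun i _ => sq_nonneg _)
    have e : φ 0 + ρ 0 = ∑ i ∈ Finset.range (n+1), (lam i)^2 * (a i)^2 := by
      rw [hφ, hρ, ← hsplitSum]
      exact Finset.sum_congr rfl
        (fun i hi => by rw [hva i (Finset.mem_range_succ_iff.mp hi)])
    have hle : φ 0 + ρ 0 ≤ ∑' i, (lam i)^2 * (a i)^2 := by
      rw [e]; exact hsuma.sum_le_tsum _ (fun i _ => by positivity)
    have h2 : Mfun m (φ 0 + ρ 0) ≤ Mfun m (∑' i, (lam i)^2 * (a i)^2) := by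
      have := Mfun_lb hmc hm_lb (hSnn 0) hle
      nlinarith [mul_nonneg hμ₁.le (sub_nonneg.mpr hle)]
    have : H0 lam m a b = (∑' i, (b i)^2) + Mfun m (∑' i, (lam i)^2 * (a i)^2) := rfl
    rw [this]
    linarith
  have hEb : ∀ s, 0 ≤ s →
      (∑ i ∈ Finset.range (n+1), (derIci (v i) s)^2) + Mfun m (φ s + ρ s)
      ≤ H0 lam m a b := fun s hs => (hEconst s hs).le.trans hE0le
  -- pointwise lower bounds on F
  have hMdiff : ∀ s, 0 ≤ s → μ₁ * ρ s ≤ Mfun m (φ s + ρ s) - Mfun m (φ s) := by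
    intro s _
    have h := Mfun_lb hmc hm_lb (hφ0 s) (le_add_of_nonneg_right (hρ0 s))
    have e : φ s + ρ s - φ s = ρ s := by ring
    rwa [e] at h
  have hFnn : ∀ s, 0 ≤ s → 0 ≤ F s := by
    intro s hs
    rw [hF]
    have h1 := hMdiff s hs
    have h2 : (0:ℝ) ≤ ∑ i ∈ Finset.Icc (k+1) n, (derIci (v i) s)^2 :=
      Finset.sum_nonneg fun i _ => sq_nonneg _
    nlinarith [mul_nonneg hμ₁.le (hρ0 s)]
  have hρF : ∀ s, 0 ≤ s → ν * ρ s ≤ F s := by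
    intro s hs
    rw [hF]
    have h1 := hMdiff s hs
    have h2 : (0:ℝ) ≤ ∑ i ∈ Finset.Icc (k+1) n, (derIci (v i) s)^2 :=
      Finset.sum_nonneg fun i _ => sq_nonneg _
    nlinarith [mul_nonneg (sub_nonneg.mpr hνμ) (hρ0 s)]
  -- derivative of F
  have hFd : ∀ s ∈ Ici (0:ℝ), HasDerivWithinAt F
      ((m (φ s + ρ s) - m (φ s))
        * ∑ i ∈ Finset.range (k+1), 2 * (lam i)^2 * (v i s * derIci (v i) s)) (Ici 0) s := by
    intro s hs
    have hA : HasDerivWithinAt (fun u => ∑ i ∈ Finset.Icc (k+1) n, (derIci (v i) u)^2)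
        (∑ i ∈ Finset.Icc (k+1) n, 2 * (derIci (v i) s * derIci (derIci (v i)) s))
        (Ici 0) s := HasDerivWithinAt.fun_sum fun i _ => hwterm i s hs
    have h := (hA.fun_add (hMB s hs)).fun_sub (hMC s hs)
    have hFeq : F = fun u => (∑ i ∈ Finset.Icc (k+1) n, (derIci (v i) u)^2)
        + Mfun m (φ u + ρ u) - Mfun m (φ u) := funext hF
    rw [hFeq]
    refine h.congr_deriv ?_
    have hsub : ∀ i ∈ Finset.Icc (k+1) n,
        2 * (derIci (v i) s * derIci (derIci (v i)) s)
        = 2 * (derIci (v i) s * (-(m (φ s + ρ s) * (lam i)^2 * v i s))) := fun i hi => by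
      rw [hodeS i (Finset.mem_Icc.mp hi).2 s hs]
    rw [Finset.sum_congr rfl hsub]
    have e : ∑ i ∈ Finset.Icc (k+1) n,
        2 * (derIci (v i) s * (-(m (φ s + ρ s) * (lam i)^2 * v i s)))
        = -(m (φ s + ρ s) * ∑ i ∈ Finset.Icc (k+1) n,
            2 * (lam i)^2 * (v i s * derIci (v i) s)) := by
      rw [Finset.mul_sum, ← Finset.sum_neg_distrib]
      exact Finset.sum_congr rfl fun i _ => by ring
    rw [e]
    ring
  -- the Gronwall bound
  have hFcont : ContinuousOn F (Ici 0) :=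
    fun s hs => ((hFd s hs).continuousWithinAt)
  set K := L * H0 lam m a b * lam k / ν ^ 2 with hK
  have bound : ∀ x ∈ Ico (0:ℝ) T,
      ‖(m (φ x + ρ x) - m (φ x))
        * ∑ i ∈ Finset.range (k+1), 2 * (lam i)^2 * (v i x * derIci (v i) x)‖
      ≤ K * ‖F x‖ + 0 := by
    intro x hx
    have hx0 : (0:ℝ) ≤ x := hx.1
    have hWlow0 : (0:ℝ) ≤ ∑ i ∈ Finset.range (k+1), (derIci (v i) x)^2 :=
      Finset.sum_nonneg fun i _ => sq_nonneg _
    -- |dφ| ≤ lam k * (φ + Wlow)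
    have hdφb : |∑ i ∈ Finset.range (k+1), 2 * (lam i)^2 * (v i x * derIci (v i) x)|
        ≤ lam k * (φ x + ∑ i ∈ Finset.range (k+1), (derIci (v i) x)^2) := by
      calc |∑ i ∈ Finset.range (k+1), 2 * (lam i)^2 * (v i x * derIci (v i) x)|
          ≤ ∑ i ∈ Finset.range (k+1), |2 * (lam i)^2 * (v i x * derIci (v i) x)| :=
            Finset.abs_sum_le_sum_abs _ _
        _ ≤ ∑ i ∈ Finset.range (k+1),
            lam k * ((lam i)^2 * (v i x)^2 + (derIci (v i) x)^2) := by
            apply Finset.sum_le_sum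
            intro i hi
            have hik : lam i ≤ lam k := hmono (Finset.mem_range_succ_iff.mp hi)
            have h1 : |2 * (lam i)^2 * (v i x * derIci (v i) x)|
                ≤ lam i * ((lam i)^2 * (v i x)^2 + (derIci (v i) x)^2) := by
              rw [abs_le]
              constructor
              · nlinarith [mul_nonneg (hpos i).le
                  (sq_nonneg (lam i * v i x + derIci (v i) x))]
              · nlinarith [mul_nonneg (hpos i).le
                  (sq_nonneg (lam i * v i x - derIci (v i) x))]
            have h2 : lam i * ((lam i)^2 * (v i x)^2 + (derIci (v i) x)^2)
                ≤ lam k * ((lam i)^2 * (v i x)^2 + (derIci (v i) x)^2) := by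
              apply mul_le_mul_of_nonneg_right hik
              positivity
            linarith
        _ = lam k * (φ x + ∑ i ∈ Finset.range (k+1), (derIci (v i) x)^2) := by
            rw [hφ, ← Finset.sum_add_distrib, Finset.mul_sum]
    -- Lipschitz bound
    have hlip : |m (φ x + ρ x) - m (φ x)| ≤ L * ρ x := by
      have h := hm_lip (φ x) (φ x + ρ x) (hφ0 x) (hSnn x)
      have e : φ x + ρ x - φ x = ρ x := by ring
      rwa [e, abs_of_nonneg (hρ0 x)] at h
    -- cap: ν * (φ + Wlow) ≤ H0
    have hMS : μ₁ * (φ x + ρ x) ≤ Mfun m (φ x + ρ x) := by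
      have h := Mfun_lb hmc hm_lb le_rfl (hSnn x)
      rw [Mfun_zero] at h
      nlinarith
    have hlowsub : (∑ i ∈ Finset.range (k+1), (derIci (v i) x)^2)
        ≤ ∑ i ∈ Finset.range (n+1), (derIci (v i) x)^2 :=
      Finset.sum_le_sum_of_subset_of_nonneg
        (Finset.range_subset_range.mpr (by omega)) (fun i _ _ => sq_nonneg _)
    have hcap : ν * (φ x + ∑ i ∈ Finset.range (k+1), (derIci (v i) x)^2)
        ≤ H0 lam m a b := by
      have hE := hEb x hx0
      nlinarith [mul_nonneg (sub_nonneg.mpr hνμ) (hφ0 x),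
        mul_nonneg (sub_nonneg.mpr hν1) hWlow0,
        mul_nonneg hμ₁.le (hρ0 x)]
    have hFx0 : 0 ≤ F x := hFnn x hx0
    have hρFx : ν * ρ x ≤ F x := hρF x hx0
    -- combine
    have e1 : |m (φ x + ρ x) - m (φ x)|
          * |∑ i ∈ Finset.range (k+1), 2 * (lam i)^2 * (v i x * derIci (v i) x)|
        ≤ (L * ρ x) * (lam k * (φ x + ∑ i ∈ Finset.range (k+1), (derIci (v i) x)^2)) :=
      mul_le_mul hlip hdφb (abs_nonneg _) (mul_nonneg hL.le (hρ0 x))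
    have e2 : (ν * ρ x) * (ν * (φ x + ∑ i ∈ Finset.range (k+1), (derIci (v i) x)^2))
        ≤ F x * H0 lam m a b :=
      mul_le_mul hρFx hcap (mul_nonneg hν0.le (add_nonneg (hφ0 x) hWlow0)) hFx0
    have key : ν^2 * (|m (φ x + ρ x) - m (φ x)|
          * |∑ i ∈ Finset.range (k+1), 2 * (lam i)^2 * (v i x * derIci (v i) x)|)
        ≤ L * H0 lam m a b * lam k * F x := by
      nlinarith [mul_le_mul_of_nonneg_left e1 (sq_nonneg ν),
        mul_le_mul_of_nonneg_left e2 (mul_nonneg hL.le (hpos k).le)]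
    rw [Real.norm_eq_abs, Real.norm_eq_abs, abs_of_nonneg hFx0, add_zero, abs_mul, hK,
      div_mul_eq_mul_div, le_div_iff₀ (pow_pos hν0 2)]
    linarith [key]
  have hg := norm_le_gronwallBound_of_norm_deriv_right_le (a := 0) (b := T)
    (f := F)
    (f' := fun s => (m (φ s + ρ s) - m (φ s))
      * ∑ i ∈ Finset.range (k+1), 2 * (lam i)^2 * (v i s * derIci (v i) s))
    (δ := F 0) (K := K) (ε := 0)
    (hFcont.mono Set.Icc_subset_Ici_self)
    (fun x hx => (hFd x hx.1).mono (Ici_subset_Ici.mpr hx.1))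
    (by rw [Real.norm_eq_abs, abs_of_nonneg (hFnn 0 le_rfl)])
    bound T (right_mem_Icc.mpr hT)
  rw [gronwallBound_ε0] at hg
  rw [Real.norm_eq_abs, abs_of_nonneg (hFnn T hT), sub_zero] at hg
  calc F T ≤ F 0 * Real.exp (K * T) := hg
    _ = F 0 * Real.exp (L * H0 lam m a b * lam k * T / ν ^ 2) := by
        congr 1
        rw [hK]
        ring
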